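/- Let G be a group and i, j ∈ ℕ, and set l = i + j. Let π : G ≀ Σ_l → Perm (Fin l) be the projection (g, σ) ↦ σ, let e : Fin i ⊕ Fin j ≃ Fin l be the canonical equivalence (finSumFinEquiv), and let S ⊆ Fin l be the image of Fin i under e. Then the homomorphism μ : (G ≀ Σ_i) × (G ≀ Σ_j) → G ≀ Σ_l is injective, and its range is exactly π⁻¹({σ ∈ Perm (Fin l) | σ '' S = S}), the preimage of the setwise stabilizer of S. (This is the subgroup identity (Σ_n ≀ Σ_l) ∩ (Σ_{nl} × Σ_i × Σ_j) = (Σ_n ≀ Σ_i) × (Σ_n ≀ Σ_j) inside Σ_l × Σ_{nl} used in the paper's Mackey-lemma argument for the coproduct compatibility.) -/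

import Mathlib

open Equiv

/-- The action of `Perm I` on `I → G` by `(σ • g) i = g (σ⁻¹ i)`. -/
def permAut (G : Type*) [Group G] (I : Type*) : Equiv.Perm I →* MulAut (I → G) where
  toFun σ :=
    { toFun := fun g => g ∘ σ.symm
      invFun := fun g => g ∘ σ
      left_inv := fun g => by funext i; simp
      right_inv := fun g => by funext i; simp
      map_mul' := fun g h => rfl }
  map_one' := by ext g i; rfl
  map_mul' := fun σ τ => by ext g i; rfl

/-- The wreath product `G ≀ Σ(I)`. -/
abbrev Wreath (G : Type*) [Group G] (I : Type*) :=
  (I → G) ⋊[permAut G I] Equiv.Perm I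

/-- The homomorphism `(G ≀ Σ_i) × (G ≀ Σ_j) → G ≀ Σ_{i+j}` induced by the canonical
equivalence `finSumFinEquiv : Fin i ⊕ Fin j ≃ Fin (i + j)`. -/
def wreathMu (G : Type*) [Group G] (i j : ℕ) :
    Wreath G (Fin i) × Wreath G (Fin j) →* Wreath G (Fin (i + j)) where
  toFun p :=
    ⟨Sum.elim p.1.left p.2.left ∘ ⇑finSumFinEquiv.symm,
      (finSumFinEquiv.symm.trans ((p.1.right.sumCongr p.2.right).trans finSumFinEquiv) :
        Equiv.Perm (Fin (i + j)))⟩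
  map_one' := by
    ext c
    · rcases h : finSumFinEquiv.symm c with a | b <;>
        simp [h]
    · simp
  map_mul' := fun p q => by
    ext c
    · rcases h : finSumFinEquiv.symm c with a | b <;>
        (simp only [SemidirectProduct.mul_left]; simp [permAut, SemidirectProduct.mul_left, h, Equiv.Perm.mul_apply])
    · simp [Equiv.Perm.mul_apply]

theorem statement1 (G : Type*) [Group G] (i j : ℕ) :
    Function.Injective (wreathMu G i j) ∧
      Set.range (wreathMu G i j) =
        (⇑(SemidirectProduct.rightHom :
            Wreath G (Fin (i + j)) →* Equiv.Perm (Fin (i + j)))) ⁻¹'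
          {σ : Equiv.Perm (Fin (i + j)) |
            σ '' (Set.range fun a : Fin i => finSumFinEquiv (Sum.inl a)) =
              Set.range fun a : Fin i => finSumFinEquiv (Sum.inl a)} := by
  constructor
  · intro p q h
    have hl : (wreathMu G i j p).left = (wreathMu G i j q).left := by rw [h]
    have hr : (wreathMu G i j p).right = (wreathMu G i j q).right := by rw [h]
    have hsc : p.1.right.sumCongr p.2.right = q.1.right.sumCongr q.2.right := by
      ext x
      have := congrArg (fun (σ : Equiv.Perm (Fin (i+j))) => finSumFinEquiv.symm (σ (finSumFinEquiv x))) hr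
      simpa [wreathMu] using this
    have hrr := Equiv.Perm.sumCongrHom_injective
      (show Equiv.Perm.sumCongrHom (Fin i) (Fin j) (p.1.right, p.2.right)
          = Equiv.Perm.sumCongrHom (Fin i) (Fin j) (q.1.right, q.2.right) from hsc)
    have hel : Sum.elim p.1.left p.2.left = Sum.elim q.1.left q.2.left := by
      funext x
      have := congrFun hl (finSumFinEquiv x)
      simpa [wreathMu] using this
    have h1 : p.1.left = q.1.left := by funext a; exact congrFun hel (Sum.inl a)
    have h2 : p.2.left = q.2.left := by funext b; exact congrFun hel (Sum.inr b)
    have hr1 : p.1.right = q.1.right := congrArg Prod.fst hrr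
    have hr2 : p.2.right = q.2.right := congrArg Prod.snd hrr
    exact Prod.ext (SemidirectProduct.ext h1 hr1) (SemidirectProduct.ext h2 hr2)
  · ext x
    simp only [Set.mem_range, Set.mem_preimage, Set.mem_setOf_eq]
    constructor
    · rintro ⟨p, rfl⟩
      ext y
      simp only [Set.mem_image, Set.mem_range]
      constructor
      · rintro ⟨_, ⟨a, rfl⟩, rfl⟩
        exact ⟨p.1.right a, by simp [wreathMu]⟩
      · rintro ⟨a, rfl⟩
        exact ⟨finSumFinEquiv (Sum.inl (p.1.right.symm a)), ⟨_, rfl⟩, by simp [wreathMu]⟩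
    · intro hx
      set ρ := x.right with hρ
      set f := x.left with hf
      set ρ' : Equiv.Perm (Fin i ⊕ Fin j) := (finSumFinEquiv.trans ρ).trans finSumFinEquiv.symm with hρ'
      have hx' : (⇑ρ '' Set.range fun a : Fin i => finSumFinEquiv (Sum.inl a)) =
          Set.range fun a : Fin i => finSumFinEquiv (Sum.inl a) := hx
      have hmaps : Set.MapsTo ρ' (Set.range Sum.inl) (Set.range Sum.inl) := by
        rintro _ ⟨a, rfl⟩
        have hmem : ρ (finSumFinEquiv (Sum.inl a)) ∈
            Set.range fun a : Fin i => finSumFinEquiv (Sum.inl a) := by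
          rw [← hx']; exact ⟨_, ⟨a, rfl⟩, rfl⟩
        obtain ⟨a', ha'⟩ := hmem
        refine ⟨a', ?_⟩
        show Sum.inl a' = finSumFinEquiv.symm (ρ (finSumFinEquiv (Sum.inl a)))
        rw [← ha', Equiv.symm_apply_apply]
      obtain ⟨⟨σ, τ⟩, hst⟩ := Equiv.Perm.mem_sumCongrHom_range_of_perm_mapsTo_inl hmaps
      refine ⟨(⟨f ∘ finSumFinEquiv ∘ Sum.inl, σ⟩, ⟨f ∘ finSumFinEquiv ∘ Sum.inr, τ⟩), ?_⟩
      have hst' : σ.sumCongr τ = ρ' := hst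
      apply SemidirectProduct.ext
      · funext c
        show Sum.elim _ _ (finSumFinEquiv.symm c) = f c
        rcases h : finSumFinEquiv.symm c with a | b <;>
          · show f (finSumFinEquiv _) = f c
            rw [← h, Equiv.apply_symm_apply]
      · show finSumFinEquiv.symm.trans ((σ.sumCongr τ).trans finSumFinEquiv) = ρ
        rw [hst']
        ext c
        simp [hρ']
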